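/- Let X_- ∈ ℝ^{n×T} have full row rank, and let D_- = [U_-; X_-] ∈ ℝ^{(m+n)×T}. Then for any matrix M ∈ ℝ^{(m+n)×(m+n)} the matrix (I_T - X_-ᵀ(X_- X_-ᵀ)^{-1}X_-) D_-ᵀ M lies in the row space of D_-; more precisely (I_T - X_-ᵀ(X_- X_-ᵀ)^{-1}X_-) D_-ᵀ = D_-ᵀ N for N = [[I_m, 0], [-(X_- X_-ᵀ)^{-1}X_- U_-ᵀ, 0]]. -/

import Mathlib

open Matrix

/-- Key identity underlying implicit regularization: with `D₋ = [U₋; X₋]` and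
`Π_{X₋} = I - X₋ᵀ(X₋X₋ᵀ)⁻¹X₋`, we have `Π_{X₋} D₋ᵀ = D₋ᵀ N` for
`N = [[I, 0], [-(X₋X₋ᵀ)⁻¹ X₋ U₋ᵀ, 0]]`; in particular `Π_{X₋} D₋ᵀ M` lies in
the range of `D₋ᵀ` for every `M`. -/
theorem projected_gradient_in_range (m n T : ℕ)
    (U : Matrix (Fin m) (Fin T) ℝ) (X : Matrix (Fin n) (Fin T) ℝ)
    (hrank : X.rank = n)
    (D : Matrix (Fin m ⊕ Fin n) (Fin T) ℝ) (hD : D = Matrix.fromRows U X)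
    (N : Matrix (Fin m ⊕ Fin n) (Fin m ⊕ Fin n) ℝ)
    (hN : N = Matrix.fromBlocks 1 0 (-((X * Xᵀ)⁻¹ * X * Uᵀ)) 0) :
    (1 - Xᵀ * (X * Xᵀ)⁻¹ * X) * Dᵀ = Dᵀ * N ∧
      ∀ M : Matrix (Fin m ⊕ Fin n) (Fin m ⊕ Fin n) ℝ,
        ∃ N' : Matrix (Fin m ⊕ Fin n) (Fin m ⊕ Fin n) ℝ,
          (1 - Xᵀ * (X * Xᵀ)⁻¹ * X) * Dᵀ * M = Dᵀ * N' := by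
  -- `X * Xᵀ` is invertible since `X` has full row rank
  have hrk : (X * Xᵀ).rank = Fintype.card (Fin n) := by
    rw [rank_self_mul_transpose, hrank, Fintype.card_fin]
  have hUnit : IsUnit (X * Xᵀ) := by
    rw [← Matrix.mulVec_injective_iff_isUnit]
    have hsurj : Function.Surjective (X * Xᵀ).mulVecLin := by
      rw [← LinearMap.range_eq_top]
      apply Submodule.eq_top_of_finrank_eq
      rw [← Matrix.rank, hrk, Module.finrank_pi]
    exact (LinearMap.injective_iff_surjective.mpr hsurj)
  have hinv : (X * Xᵀ)⁻¹ * (X * Xᵀ) = 1 :=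
    Matrix.nonsing_inv_mul _ (Matrix.isUnit_iff_isUnit_det _ |>.mp hUnit)
  subst hD hN
  have key : (1 - Xᵀ * (X * Xᵀ)⁻¹ * X) * (Matrix.fromRows U X)ᵀ =
      (Matrix.fromRows U X)ᵀ * Matrix.fromBlocks 1 0 (-((X * Xᵀ)⁻¹ * X * Uᵀ)) 0 := by
    rw [Matrix.transpose_fromRows, Matrix.mul_fromCols]
    erw [Matrix.fromCols_mul_fromBlocks]
    have h1 : (1 - Xᵀ * (X * Xᵀ)⁻¹ * X) * Uᵀ =
        Uᵀ * (1 : Matrix (Fin m) (Fin m) ℝ) + Xᵀ * -((X * Xᵀ)⁻¹ * X * Uᵀ) := by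
      rw [Matrix.mul_one, Matrix.mul_neg, Matrix.sub_mul, Matrix.one_mul,
        ← sub_eq_add_neg, Matrix.mul_assoc, Matrix.mul_assoc, Matrix.mul_assoc]
    have h2 : (1 - Xᵀ * (X * Xᵀ)⁻¹ * X) * Xᵀ = Uᵀ * (0 : Matrix (Fin m) (Fin n) ℝ) + Xᵀ * (0 : Matrix (Fin n) (Fin n) ℝ) := by
      rw [Matrix.mul_zero, Matrix.mul_zero, add_zero, Matrix.sub_mul,
        Matrix.one_mul, sub_eq_zero, Matrix.mul_assoc, Matrix.mul_assoc,
        hinv, Matrix.mul_one]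
    rw [h1, h2]
  refine ⟨key, fun M => ⟨Matrix.fromBlocks 1 0 (-((X * Xᵀ)⁻¹ * X * Uᵀ)) 0 * M, ?_⟩⟩
  rw [key]
  exact Matrix.mul_assoc _ _ _
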